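/- Assume the anisotropic ADMM scheme. Then for every k ≥ 0, ‖D_h u^{k+1} − t^{k+1} + λ_t^k/β_t^k‖ ≤ ‖Au^0 − g‖/√(β_t^k) + 2√(μN(k+1)/β_t^k), and the analogous bound holds with (s, λ_s, β_s, D_v) in place of (t, λ_t, β_t, D_h). -/

import Mathlib

open Matrix Filter Topology

/-- Euclidean norm of a vector in `ℝ^n`. -/
noncomputable def enorm2 {n : ℕ} (v : Fin n → ℝ) : ℝ :=
  Real.sqrt (∑ i, (v i) ^ 2)

/-- ℓ⁰ "norm": number of nonzero entries of a vector. -/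
noncomputable def l0 {n : ℕ} (v : Fin n → ℝ) : ℕ :=
  (Finset.univ.filter fun i => v i ≠ 0).card

/-- Isotropic ℓ⁰ count: number of indices where the pair of entries is nonzero. -/
noncomputable def l02 {n : ℕ} (zh zv : Fin n → ℝ) : ℕ :=
  (Finset.univ.filter fun i => zh i ≠ 0 ∨ zv i ≠ 0).card

lemma enorm_nonneg' {n : ℕ} (v : Fin n → ℝ) : 0 ≤ enorm2 v := Real.sqrt_nonneg _

lemma enorm_sq' {n : ℕ} (v : Fin n → ℝ) : enorm2 v ^ 2 = ∑ i, (v i) ^ 2 :=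
  Real.sq_sqrt (Finset.sum_nonneg fun i _ => sq_nonneg _)

lemma enorm_zero' {n : ℕ} : enorm2 (0 : Fin n → ℝ) = 0 := by simp [enorm2]

lemma enorm_sub_comm' {n : ℕ} (x y : Fin n → ℝ) : enorm2 (x - y) = enorm2 (y - x) := by
  unfold enorm2
  congr 1
  apply Finset.sum_congr rfl
  intro i _
  simp only [Pi.sub_apply]
  ring

lemma l0_le' {n : ℕ} (v : Fin n → ℝ) : (l0 v : ℝ) ≤ n := by
  have := Finset.card_filter_le (Finset.univ : Finset (Fin n)) (fun i => v i ≠ 0)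
  simp only [Finset.card_univ, Fintype.card_fin] at this
  exact_mod_cast this

lemma final_step' (β c R W : ℝ) (hβ : 0 < β) (hR : 0 ≤ R) (hW : 0 ≤ W) (hc : 0 ≤ c)
    (h : β / 2 * R ^ 2 ≤ 1 / 2 * W ^ 2 + 2 * c) :
    R ≤ W / Real.sqrt β + 2 * Real.sqrt (c / β) := by
  set a := W / Real.sqrt β with ha_def
  set b := 2 * Real.sqrt (c / β) with hb_def
  have hsβ : (0:ℝ) < Real.sqrt β := Real.sqrt_pos.2 hβ
  have ha : 0 ≤ a := div_nonneg hW hsβ.le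
  have hb : 0 ≤ b := by positivity
  have ha2 : a ^ 2 = W ^ 2 / β := by
    rw [ha_def, div_pow, Real.sq_sqrt hβ.le]
  have hb2 : b ^ 2 = 4 * (c / β) := by
    rw [hb_def, mul_pow, Real.sq_sqrt (div_nonneg hc hβ.le)]; ring
  have haβ : a ^ 2 * β = W ^ 2 := by rw [ha2]; field_simp
  have hbβ : b ^ 2 * β = 4 * c := by rw [hb2]; field_simp
  have h2 : β * R ^ 2 ≤ β * (a + b) ^ 2 := by
    nlinarith [mul_nonneg (mul_nonneg ha hb) hβ.le]
  have h3 : R ^ 2 ≤ (a + b) ^ 2 := le_of_mul_le_mul_left h2 hβ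
  calc R = Real.sqrt (R ^ 2) := (Real.sqrt_sq hR).symm
    _ ≤ Real.sqrt ((a + b) ^ 2) := Real.sqrt_le_sqrt h3
    _ = a + b := Real.sqrt_sq (by linarith)

/-- bound on the residuals of the anisotropic ADMM scheme. -/
theorem anisotropic_ADMM_residual_bound (M N : ℕ) (A : Matrix (Fin M) (Fin N) ℝ)
    (Dh Dv : Matrix (Fin N) (Fin N) ℝ) (g : Fin M → ℝ) (μ : ℝ) (hμ : 0 < μ)
    (t s u lt ls : ℕ → Fin N → ℝ) (βt βs : ℕ → ℝ)
    (hβt : ∀ k, 0 < βt k) (hβs : ∀ k, 0 < βs k)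
    -- (i): t^{k+1} minimizes the anisotropic ℓ⁰ subproblem
    (ht : ∀ k, ∀ t' : Fin N → ℝ,
      μ * (l0 (t (k + 1)) : ℝ)
          + βt k / 2 * enorm2 (t (k + 1) - (Dh.mulVec (u k) + (βt k)⁻¹ • lt k)) ^ 2
        ≤ μ * (l0 t' : ℝ)
          + βt k / 2 * enorm2 (t' - (Dh.mulVec (u k) + (βt k)⁻¹ • lt k)) ^ 2)
    -- (ii): s^{k+1} minimizes the anisotropic ℓ⁰ subproblem
    (hs : ∀ k, ∀ s' : Fin N → ℝ,
      μ * (l0 (s (k + 1)) : ℝ)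
          + βs k / 2 * enorm2 (s (k + 1) - (Dv.mulVec (u k) + (βs k)⁻¹ • ls k)) ^ 2
        ≤ μ * (l0 s' : ℝ)
          + βs k / 2 * enorm2 (s' - (Dv.mulVec (u k) + (βs k)⁻¹ • ls k)) ^ 2)
    -- (iii): u^{k+1} minimizes the quadratic subproblem
    (hu : ∀ k, ∀ v : Fin N → ℝ,
      1 / 2 * enorm2 (A.mulVec (u (k + 1)) - g) ^ 2
          + βt k / 2 * enorm2 (Dh.mulVec (u (k + 1)) - (t (k + 1) - (βt k)⁻¹ • lt k)) ^ 2
          + βs k / 2 * enorm2 (Dv.mulVec (u (k + 1)) - (s (k + 1) - (βs k)⁻¹ • ls k)) ^ 2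
        ≤ 1 / 2 * enorm2 (A.mulVec v - g) ^ 2
          + βt k / 2 * enorm2 (Dh.mulVec v - (t (k + 1) - (βt k)⁻¹ • lt k)) ^ 2
          + βs k / 2 * enorm2 (Dv.mulVec v - (s (k + 1) - (βs k)⁻¹ • ls k)) ^ 2)
    -- (iv): dual updates
    (hlt : ∀ k, lt (k + 1) = lt k - βt k • (t (k + 1) - Dh.mulVec (u (k + 1))))
    (hls : ∀ k, ls (k + 1) = ls k - βs k • (s (k + 1) - Dv.mulVec (u (k + 1))))
    : ∀ k : ℕ,
      enorm2 (Dh.mulVec (u (k + 1)) - t (k + 1) + (βt k)⁻¹ • lt k)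
          ≤ enorm2 (A.mulVec (u 0) - g) / Real.sqrt (βt k)
            + 2 * Real.sqrt (μ * N * (k + 1) / βt k) ∧
      enorm2 (Dv.mulVec (u (k + 1)) - s (k + 1) + (βs k)⁻¹ • ls k)
          ≤ enorm2 (A.mulVec (u 0) - g) / Real.sqrt (βs k)
            + 2 * Real.sqrt (μ * N * (k + 1) / βs k) := by
  -- bound from the ℓ⁰ subproblems (test point = the shifted iterate)
  have hAt : ∀ j, βt j / 2 * enorm2 (t (j+1) - (Dh.mulVec (u j) + (βt j)⁻¹ • lt j)) ^ 2
      ≤ μ * N := by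
    intro j
    have h := ht j (Dh.mulVec (u j) + (βt j)⁻¹ • lt j)
    rw [sub_self, enorm_zero'] at h
    have h1 : (0:ℝ) ≤ μ * (l0 (t (j+1)) : ℝ) := by positivity
    have h2 : μ * (l0 (Dh.mulVec (u j) + (βt j)⁻¹ • lt j) : ℝ) ≤ μ * N :=
      mul_le_mul_of_nonneg_left (l0_le' _) hμ.le
    nlinarith
  have hAs : ∀ j, βs j / 2 * enorm2 (s (j+1) - (Dv.mulVec (u j) + (βs j)⁻¹ • ls j)) ^ 2
      ≤ μ * N := by
    intro j
    have h := hs j (Dv.mulVec (u j) + (βs j)⁻¹ • ls j)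
    rw [sub_self, enorm_zero'] at h
    have h1 : (0:ℝ) ≤ μ * (l0 (s (j+1)) : ℝ) := by positivity
    have h2 : μ * (l0 (Dv.mulVec (u j) + (βs j)⁻¹ • ls j) : ℝ) ≤ μ * N :=
      mul_le_mul_of_nonneg_left (l0_le' _) hμ.le
    nlinarith
  -- key estimate from the u-subproblem with test point u^j
  have key : ∀ j,
      βt j / 2 * enorm2 (Dh.mulVec (u (j+1)) - (t (j+1) - (βt j)⁻¹ • lt j)) ^ 2
        ≤ 1/2 * enorm2 (A.mulVec (u j) - g) ^ 2 + 2 * μ * N ∧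
      βs j / 2 * enorm2 (Dv.mulVec (u (j+1)) - (s (j+1) - (βs j)⁻¹ • ls j)) ^ 2
        ≤ 1/2 * enorm2 (A.mulVec (u j) - g) ^ 2 + 2 * μ * N ∧
      1/2 * enorm2 (A.mulVec (u (j+1)) - g) ^ 2
        ≤ 1/2 * enorm2 (A.mulVec (u j) - g) ^ 2 + 2 * μ * N := by
    intro j
    have h := hu j (u j)
    have e1 : Dh.mulVec (u j) - (t (j+1) - (βt j)⁻¹ • lt j)
        = (Dh.mulVec (u j) + (βt j)⁻¹ • lt j) - t (j+1) := by
      funext i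
      simp only [Pi.sub_apply, Pi.add_apply, Pi.smul_apply, smul_eq_mul]
      ring
    have e2 : Dv.mulVec (u j) - (s (j+1) - (βs j)⁻¹ • ls j)
        = (Dv.mulVec (u j) + (βs j)⁻¹ • ls j) - s (j+1) := by
      funext i
      simp only [Pi.sub_apply, Pi.add_apply, Pi.smul_apply, smul_eq_mul]
      ring
    have e1' : enorm2 (Dh.mulVec (u j) - (t (j+1) - (βt j)⁻¹ • lt j))
        = enorm2 (t (j+1) - (Dh.mulVec (u j) + (βt j)⁻¹ • lt j)) := by
      rw [e1]; exact enorm_sub_comm' _ _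
    have e2' : enorm2 (Dv.mulVec (u j) - (s (j+1) - (βs j)⁻¹ • ls j))
        = enorm2 (s (j+1) - (Dv.mulVec (u j) + (βs j)⁻¹ • ls j)) := by
      rw [e2]; exact enorm_sub_comm' _ _
    rw [e1', e2'] at h
    have p0 : (0:ℝ) ≤ 1/2 * enorm2 (A.mulVec (u (j+1)) - g) ^ 2 := by positivity
    have p1 : (0:ℝ) ≤ βt j / 2
        * enorm2 (Dh.mulVec (u (j+1)) - (t (j+1) - (βt j)⁻¹ • lt j)) ^ 2 :=
      mul_nonneg (by linarith [hβt j]) (sq_nonneg _)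
    have p2 : (0:ℝ) ≤ βs j / 2
        * enorm2 (Dv.mulVec (u (j+1)) - (s (j+1) - (βs j)⁻¹ • ls j)) ^ 2 :=
      mul_nonneg (by linarith [hβs j]) (sq_nonneg _)
    have q1 := hAt j
    have q2 := hAs j
    exact ⟨by linarith, by linarith, by linarith⟩
  -- energy decrease by induction
  have hE : ∀ j, 1/2 * enorm2 (A.mulVec (u j) - g) ^ 2
      ≤ 1/2 * enorm2 (A.mulVec (u 0) - g) ^ 2 + 2 * μ * N * j := by
    intro j
    induction j with
    | zero => simp
    | succ n ih =>
      have h := (key n).2.2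
      push_cast
      push_cast at ih
      nlinarith
  intro k
  have hc : (0:ℝ) ≤ μ * N * (k + 1) := by positivity
  constructor
  · have h1 := (key k).1
    have h2 := hE k
    have e3 : Dh.mulVec (u (k+1)) - t (k+1) + (βt k)⁻¹ • lt k
        = Dh.mulVec (u (k+1)) - (t (k+1) - (βt k)⁻¹ • lt k) := by
      funext i
      simp only [Pi.sub_apply, Pi.add_apply, Pi.smul_apply, smul_eq_mul]
      ring
    rw [e3]
    apply final_step' _ _ _ _ (hβt k) (enorm_nonneg' _) (enorm_nonneg' _) hc
    push_cast
    push_cast at h2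
    nlinarith
  · have h1 := (key k).2.1
    have h2 := hE k
    have e3 : Dv.mulVec (u (k+1)) - s (k+1) + (βs k)⁻¹ • ls k
        = Dv.mulVec (u (k+1)) - (s (k+1) - (βs k)⁻¹ • ls k) := by
      funext i
      simp only [Pi.sub_apply, Pi.add_apply, Pi.smul_apply, smul_eq_mul]
      ring
    rw [e3]
    apply final_step' _ _ _ _ (hβs k) (enorm_nonneg' _) (enorm_nonneg' _) hc
    push_cast
    push_cast at h2
    nlinarith
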